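/- Let α ∈ (0,1), κ ∈ (0, 1/2], A ≥ 0, B ≥ 0, ε₀ > 0, and let ω : (0, ∞) → [0, ∞) be a bounded function satisfying ω(r) ≤ max{ A r^α , B r^α + κ ω(2r) + (1 − 2κ) ω(r) } for every r ∈ (0, ε₀]. Let C₄ ≥ max{ A , B / ((1 − 2^{α−1}) κ) }. Then for every r ∈ (0, ε₀]: if ω(2r) ≤ C₄ (2r)^α, then ω(r) ≤ C₄ r^α. -/

import Mathlib

/-- The inductive step for iterating the functional inequality for the
modulus of continuity: if `ω(2r) ≤ C₄ (2r)^α`, then `ω(r) ≤ C₄ r^α`, provided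
`C₄ ≥ max { A, B / ((1 - 2^{α-1}) κ) }`. -/
theorem stmt_4
    (α κ A B ε₀ C₄ : ℝ) (ω : ℝ → ℝ)
    (hα : α ∈ Set.Ioo (0:ℝ) 1) (hκ : κ ∈ Set.Ioc (0:ℝ) (1/2))
    (hA : 0 ≤ A) (hB : 0 ≤ B) (hε₀ : 0 < ε₀)
    (hωnn : ∀ r : ℝ, 0 < r → 0 ≤ ω r)
    (hωbd : ∃ M : ℝ, ∀ r : ℝ, 0 < r → ω r ≤ M)
    (hineq : ∀ r : ℝ, 0 < r → r ≤ ε₀ →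
      ω r ≤ max (A * r ^ α) (B * r ^ α + κ * ω (2 * r) + (1 - 2 * κ) * ω r))
    (hC₄ : max A (B / ((1 - 2 ^ (α - 1)) * κ)) ≤ C₄) :
    ∀ r : ℝ, 0 < r → r ≤ ε₀ → ω (2 * r) ≤ C₄ * (2 * r) ^ α → ω r ≤ C₄ * r ^ α := by
  intro r hr hrε h2r
  obtain ⟨hα0, hα1⟩ := hα
  obtain ⟨hκ0, hκ2⟩ := hκ
  have hpow1 : (2:ℝ) ^ (α - 1) < 1 :=
    Real.rpow_lt_one_of_one_lt_of_neg one_lt_two (by linarith)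
  have hpow0 : (0:ℝ) < (2:ℝ) ^ (α - 1) := Real.rpow_pos_of_pos two_pos _
  have hden : 0 < (1 - (2:ℝ) ^ (α - 1)) * κ := mul_pos (by linarith) hκ0
  have hAC : A ≤ C₄ := le_trans (le_max_left _ _) hC₄
  have hBC : B ≤ C₄ * ((1 - (2:ℝ) ^ (α - 1)) * κ) := by
    have := le_trans (le_max_right _ _) hC₄
    calc B = B / ((1 - (2:ℝ) ^ (α - 1)) * κ) * ((1 - (2:ℝ) ^ (α - 1)) * κ) := by
            rw [div_mul_cancel₀ (h := hden.ne')]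
      _ ≤ C₄ * ((1 - (2:ℝ) ^ (α - 1)) * κ) := by
            apply mul_le_mul_of_nonneg_right this hden.le
  have hrpow : (0:ℝ) < r ^ α := Real.rpow_pos_of_pos hr _
  have hC₄0 : 0 ≤ C₄ := le_trans hA hAC
  have h2rpow : (2 * r) ^ α = 2 * (2:ℝ) ^ (α - 1) * (r ^ α) := by
    rw [Real.mul_rpow (by norm_num) hr.le]
    have : (2:ℝ) ^ α = 2 * (2:ℝ) ^ (α - 1) := by
      rw [show α = (α - 1) + 1 by ring, Real.rpow_add two_pos, Real.rpow_one]
      ring_nf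
    rw [this]
  rcases le_max_iff.mp (hineq r hr hrε) with h | h
  · calc ω r ≤ A * r ^ α := h
      _ ≤ C₄ * r ^ α := mul_le_mul_of_nonneg_right hAC hrpow.le
  · -- 2κ ω r ≤ B r^α + κ ω(2r)
    have hω2 : ω (2 * r) ≤ C₄ * (2 * (2:ℝ) ^ (α - 1) * r ^ α) := by
      rw [← h2rpow]; exact h2r
    have key : 0 ≤ C₄ * r ^ α * (κ * (1 - (2:ℝ) ^ (α - 1))) :=
      mul_nonneg (mul_nonneg hC₄0 hrpow.le) (mul_nonneg hκ0.le (by linarith))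
    nlinarith [mul_le_mul_of_nonneg_left hω2 hκ0.le,
      mul_le_mul_of_nonneg_right hBC hrpow.le]
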